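/- For a log-normal random variable X with parameters μ ∈ ℝ and σ ≥ √(ln 2), P(|X - E[X]| ≤ √Var(X)) = Φ((σ²/2 + ln(1 + √(exp(σ²) - 1)))/σ), where Φ is the standard normal CDF. -/
import Mathlib


open Real MeasureTheory ProbabilityTheory Set

/-- The standard normal cumulative distribution function. -/
noncomputable def stdNormalCDF (x : ℝ) : ℝ :=
  ((gaussianReal 0 1) (Set.Iic x)).toReal

theorem lognormal_probability_formula (μ σ : ℝ) (hσ : Real.sqrt (Real.log 2) ≤ σ) :
    ((Measure.map (fun z : ℝ => Real.exp (μ + σ * z)) (gaussianReal 0 1))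
      {x : ℝ | |x - Real.exp (μ + σ ^ 2 / 2)| ≤
        Real.sqrt ((Real.exp (σ ^ 2) - 1) * Real.exp (2 * μ + σ ^ 2))}).toReal
    = stdNormalCDF ((σ ^ 2 / 2 + Real.log (1 + Real.sqrt (Real.exp (σ ^ 2) - 1))) / σ) := by
  have hσ0 : 0 < σ := lt_of_lt_of_le (Real.sqrt_pos.mpr (Real.log_pos one_lt_two)) hσ
  have hσ2 : Real.log 2 ≤ σ ^ 2 := by
    nlinarith [Real.sq_sqrt (Real.log_nonneg one_le_two), Real.sqrt_nonneg (Real.log 2)]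
  have hv1 : 1 ≤ Real.exp (σ ^ 2) - 1 := by
    have h2 : (2 : ℝ) ≤ Real.exp (σ ^ 2) := by
      calc (2 : ℝ) = Real.exp (Real.log 2) := (Real.exp_log two_pos).symm
        _ ≤ _ := Real.exp_le_exp.mpr hσ2
    linarith
  set v := Real.sqrt (Real.exp (σ ^ 2) - 1) with hvdef
  set m := Real.exp (μ + σ ^ 2 / 2) with hmdef
  have hv : 1 ≤ v := by
    rw [hvdef]
    nlinarith [Real.sq_sqrt (show (0:ℝ) ≤ Real.exp (σ ^ 2) - 1 by linarith),
      Real.sqrt_nonneg (Real.exp (σ ^ 2) - 1)]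
  have hm0 : 0 < m := Real.exp_pos _
  have hs : Real.sqrt ((Real.exp (σ ^ 2) - 1) * Real.exp (2 * μ + σ ^ 2)) = v * m := by
    rw [Real.sqrt_mul (by linarith)]
    congr 1
    have : Real.exp (2 * μ + σ ^ 2) = m ^ 2 := by
      rw [hmdef, ← Real.exp_nat_mul]; congr 1; push_cast; ring
    rw [this, Real.sqrt_sq hm0.le]
  rw [hs]
  have hf : Measurable (fun z : ℝ => Real.exp (μ + σ * z)) :=
    Real.measurable_exp.comp (measurable_const.add (measurable_id.const_mul σ))
  have hmeas : MeasurableSet {x : ℝ | |x - m| ≤ v * m} :=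
    measurableSet_le ((measurable_id.sub_const m).abs) measurable_const
  rw [Measure.map_apply hf hmeas]
  have hset : (fun z : ℝ => Real.exp (μ + σ * z)) ⁻¹' {x | |x - m| ≤ v * m}
      = Set.Iic ((σ ^ 2 / 2 + Real.log (1 + v)) / σ) := by
    ext z
    simp only [Set.mem_preimage, Set.mem_setOf_eq, Set.mem_Iic, abs_le]
    have h1v : 0 < 1 + v := by linarith
    have hlog : Real.log (m * (1 + v)) = μ + σ ^ 2 / 2 + Real.log (1 + v) := by
      rw [Real.log_mul hm0.ne' h1v.ne', hmdef, Real.log_exp]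
    constructor
    · rintro ⟨_, h2⟩
      have hle : Real.exp (μ + σ * z) ≤ m * (1 + v) := by nlinarith
      have := (Real.le_log_iff_exp_le (by positivity)).mpr hle
      rw [hlog] at this
      rw [le_div_iff₀ hσ0]
      nlinarith
    · intro hz
      rw [le_div_iff₀ hσ0] at hz
      have h1 : μ + σ * z ≤ Real.log (m * (1 + v)) := by rw [hlog]; nlinarith
      have h2 : Real.exp (μ + σ * z) ≤ m * (1 + v) :=
        (Real.le_log_iff_exp_le (by positivity)).mp h1
      have h3 : 0 < Real.exp (μ + σ * z) := Real.exp_pos _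
      constructor <;> nlinarith
  rw [hset]
  rfl
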